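/- Let G be a finite group, g, h ∈ G, and suppose the cyclic subgroup ⟨h⟩ generated by h is disjoint from the conjugacy class [g] of g. Then there exists a virtual character x (a ℤ-linear combination of irreducible complex characters of G) such that x(g) ≠ 0 and x(h^m) = 0 for all integers m. -/

import Mathlib

open CategoryTheory
set_option linter.unusedSectionVars false
set_option maxHeartbeats 800000

namespace Sep

variable {G : Type} [Group G] [Fintype G]
variable {V : Type} [AddCommGroup V] [Module ℂ V]

def IsInvariant (ρ : Representation ℂ G V) (p : Submodule ℂ V) : Prop :=
  ∀ (g : G) (v : V), v ∈ p → ρ g v ∈ p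

noncomputable def restrictRep (ρ : Representation ℂ G V) (p : Submodule ℂ V)
    (hp : IsInvariant ρ p) : Representation ℂ G p where
  toFun g := (ρ g).restrict (fun v hv => hp g v hv)
  map_one' := by ext v; simp [LinearMap.restrict_apply]
  map_mul' g₁ g₂ := by ext v; simp [LinearMap.restrict_apply]

@[simp] theorem restrictRep_apply (ρ : Representation ℂ G V) (p : Submodule ℂ V)
    (hp : IsInvariant ρ p) (g : G) (v : p) :
    (restrictRep ρ p hp g v : V) = ρ g (v : V) := rfl

section Maschke

variable (ρ : Representation ℂ G V) (p : Submodule ℂ V) (hp : IsInvariant ρ p)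

noncomputable def eqProj (π : V →ₗ[ℂ] p) : V →ₗ[ℂ] p :=
  ((Fintype.card G : ℂ)⁻¹) • (∑ s : G, (restrictRep ρ p hp s⁻¹) ∘ₗ (π ∘ₗ ρ s))

theorem eqProj_comm (π : V →ₗ[ℂ] p) (t : G) (v : V) :
    eqProj ρ p hp π (ρ t v) = restrictRep ρ p hp t (eqProj ρ p hp π v) := by
  set ρp := restrictRep ρ p hp with hρp
  simp only [eqProj, LinearMap.smul_apply, LinearMap.sum_apply, LinearMap.comp_apply,
    map_smul, map_sum]
  congr 1
  have key : ∀ s : G, ρp s⁻¹ (π (ρ s (ρ t v))) = ρp t (ρp (s * t)⁻¹ (π (ρ (s * t) v))) := by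
    intro s
    have h1 : ρ s (ρ t v) = ρ (s * t) v := by
      rw [map_mul]; rfl
    have h2 : ∀ x : p, ρp t (ρp (s * t)⁻¹ x) = ρp s⁻¹ x := by
      intro x
      rw [← Module.End.mul_apply, ← map_mul, mul_inv_rev, ← mul_assoc, mul_inv_cancel, one_mul]
    rw [h1, h2]
  simp only [← hρp, key]
  exact Fintype.sum_bijective (· * t) (Group.mulRight_bijective t)
    (fun s => ρp t (ρp (s * t)⁻¹ (π (ρ (s * t) v)))) (fun s => ρp t (ρp s⁻¹ (π (ρ s v))))
    (fun x => rfl)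

theorem eqProj_mem (π : V →ₗ[ℂ] p) (hπ : ∀ x : p, π (x : V) = x) (x : p) :
    eqProj ρ p hp π (x : V) = x := by
  have h1 : ∀ s : G, (restrictRep ρ p hp s⁻¹) (π (ρ s (x : V))) = x := by
    intro s
    have hx : ρ s (x : V) ∈ p := hp s _ x.2
    have h : π (ρ s (x : V)) = ⟨ρ s (x : V), hx⟩ := hπ ⟨ρ s (x : V), hx⟩
    rw [h]
    apply Subtype.ext
    simp only [restrictRep_apply]
    rw [← Module.End.mul_apply, ← map_mul, inv_mul_cancel, map_one, Module.End.one_apply]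
  simp only [eqProj, LinearMap.smul_apply, LinearMap.sum_apply, LinearMap.comp_apply]
  simp only [h1]
  rw [Finset.sum_const, Finset.card_univ, ← Nat.cast_smul_eq_nsmul ℂ, smul_smul,
    inv_mul_cancel₀ (Nat.cast_ne_zero.2 Fintype.card_ne_zero), one_smul]

theorem exists_invariant_compl (hp : IsInvariant ρ p) :
    ∃ q : Submodule ℂ V, IsInvariant ρ q ∧ IsCompl p q := by
  obtain ⟨π, hπ⟩ := p.subtype.exists_leftInverse_of_injective p.ker_subtype
  have hπ' : ∀ x : p, π (x : V) = x := fun x => by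
    have := LinearMap.ext_iff.1 hπ x
    simpa using this
  set π' := eqProj ρ p hp π with hπ'def
  have hproj : ∀ x : p, π' (x : V) = x := eqProj_mem ρ p hp π hπ'
  refine ⟨LinearMap.ker π', ?_, LinearMap.isCompl_of_proj hproj⟩
  intro t v hv
  have hv0 : π' v = 0 := hv
  have : π' (ρ t v) = 0 := by
    rw [hπ'def, eqProj_comm ρ p hp π t v, ← hπ'def, hv0, map_zero]
  exact this

end Maschke

section CharSplit

variable [FiniteDimensional ℂ V]

/-- Characters add along an invariant decomposition. -/
theorem char_add_of_isCompl (ρ : Representation ℂ G V) (p q : Submodule ℂ V)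
    (hp : IsInvariant ρ p) (hq : IsInvariant ρ q) (hc : IsCompl p q) (t : G) :
    LinearMap.trace ℂ V (ρ t) =
      LinearMap.trace ℂ p (restrictRep ρ p hp t) + LinearMap.trace ℂ q (restrictRep ρ q hq t) := by
  set e := Submodule.prodEquivOfIsCompl p q hc with he
  have hcomm : ρ t = (e.conj ((restrictRep ρ p hp t).prodMap (restrictRep ρ q hq t))) := by
    apply LinearMap.ext
    intro v
    obtain ⟨⟨x, y⟩, rfl⟩ := e.surjective v
    rw [LinearEquiv.conj_apply_apply, LinearEquiv.symm_apply_apply,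
      Submodule.coe_prodEquivOfIsCompl', LinearMap.prodMap_apply,
      Submodule.coe_prodEquivOfIsCompl', map_add, restrictRep_apply, restrictRep_apply]
  rw [hcomm, LinearMap.trace_conj', LinearMap.trace_prodMap']

end CharSplit

section FDRepPart

open Module

variable (G)

/-- The span of simple characters. -/
noncomputable def R : Submodule ℤ (G → ℂ) :=
  Submodule.span ℤ {f : G → ℂ | ∃ V : FDRep ℂ G, Simple V ∧ f = V.character}

variable {G}

/-- Underlying linear map of an FDRep morphism. -/
def homLin {Y W : FDRep ℂ G} (f : Y ⟶ W) : (↥Y) →ₗ[ℂ] (↥W) := f.hom.hom.hom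

theorem homLin_comm {Y W : FDRep ℂ G} (f : Y ⟶ W) (t : G) (y : ↥Y) :
    homLin f (Y.ρ t y) = W.ρ t (homLin f y) := by
  have h := f.comm t
  have h2 := congrArg (fun φ => φ.hom.hom y) h
  exact h2

theorem hom_eq_of_homLin {Y W : FDRep ℂ G} (f f' : Y ⟶ W) (h : homLin f = homLin f') : f = f' :=
  Action.hom_ext f f' (FGModuleCat.hom_ext h)

theorem homLin_zero {Y W : FDRep ℂ G} : homLin (0 : Y ⟶ W) = 0 := by
  apply LinearMap.ext
  intro y
  show (Action.Hom.hom (0 : Y ⟶ W)).hom.hom y = 0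
  rw [Action.zero_hom]
  rfl

theorem simple_of_no_invariant (V : FDRep ℂ G) (h0 : 0 < finrank ℂ V)
    (hs : ∀ p : Submodule ℂ (↥V), IsInvariant V.ρ p → p = ⊥ ∨ p = ⊤) : Simple V := by
  have hVne : (𝟙 V : V ⟶ V) ≠ 0 := by
    intro hid
    have : ∀ v : ↥V, v = 0 := by
      intro v
      have h1 : homLin (𝟙 V : V ⟶ V) v = v := rfl
      rw [hid] at h1
      have h2 : homLin (0 : V ⟶ V) v = 0 := by
        show (Action.Hom.hom (0 : V ⟶ V)).hom.hom v = 0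
        rw [Action.zero_hom]
        rfl
      rw [h2] at h1
      exact h1.symm
    have : Subsingleton (↥V) := ⟨fun a b => by rw [this a, this b]⟩
    rw [finrank_zero_of_subsingleton] at h0
    exact Nat.lt_irrefl 0 h0
  constructor
  intro Y f hf
  have hrange : IsInvariant V.ρ (LinearMap.range (homLin f)) := by
    rintro t v ⟨y, rfl⟩
    exact ⟨Y.ρ t y, homLin_comm f t y⟩
  rcases hs _ hrange with hbot | htop
  · -- f = 0 : both sides of the iff are false
    have hf0 : f = 0 := by
      apply hom_eq_of_homLin
      rw [LinearMap.range_eq_bot.mp hbot, homLin_zero]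
    constructor
    · intro hiso
      exfalso
      have h := IsIso.inv_hom_id f
      have hlin : homLin f = 0 := LinearMap.range_eq_bot.mp hbot
      have hall : ∀ v : ↥V, v = 0 := by
        intro v
        have h1 : homLin (inv f ≫ f) v = v := by rw [h]; rfl
        have h2 : homLin (inv f ≫ f) v = homLin f (homLin (inv f) v) := rfl
        rw [h2, hlin] at h1
        simpa using h1.symm
      have : Subsingleton (↥V) := ⟨fun a b => by rw [hall a, hall b]⟩
      rw [finrank_zero_of_subsingleton] at h0
      exact Nat.lt_irrefl 0 h0
    · intro hne
      exact absurd hf0 hne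
  · -- f is surjective; use Mono to get injectivity
    have hker : IsInvariant Y.ρ (LinearMap.ker (homLin f)) := by
      intro t y hy
      have : homLin f (Y.ρ t y) = 0 := by
        rw [homLin_comm f t y, LinearMap.mem_ker.mp hy, map_zero]
      exact this
    set K := LinearMap.ker (homLin f) with hK
    let u : FDRep.of (restrictRep Y.ρ K hker) ⟶ Y :=
      ⟨FGModuleCat.ofHom (K.subtype : ↥K →ₗ[ℂ] ↥Y), fun t => rfl⟩
    have hu0 : u = 0 := by
      have h1 : u ≫ f = 0 := by
        apply hom_eq_of_homLin
        rw [homLin_zero]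
        apply LinearMap.ext
        intro x
        exact x.2
      have huf : u ≫ f = (0 : FDRep.of (restrictRep Y.ρ K hker) ⟶ Y) ≫ f := by
        rw [h1, Limits.zero_comp]
      exact Mono.right_cancellation u 0 huf
    have hinj : Function.Injective (homLin f) := by
      rw [← LinearMap.ker_eq_bot]
      rw [← hK]
      apply (Submodule.eq_bot_iff K).mpr
      intro x hx
      have : ((⟨x, hx⟩ : ↥K) : ↥Y) = 0 := by
        have := congrArg (fun (w : _ ⟶ Y) => homLin w (⟨x, hx⟩ : ↥K)) hu0
        rw [homLin_zero] at this
        exact this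
      exact this
    have hsurj : Function.Surjective (homLin f) := LinearMap.range_eq_top.mp htop
    let e : (↥Y) ≃ₗ[ℂ] (↥V) := LinearEquiv.ofBijective (homLin f) ⟨hinj, hsurj⟩
    have hecomm : ∀ (t : G) (v : ↥V), e.symm (V.ρ t v) = Y.ρ t (e.symm v) := by
      intro t v
      apply hinj
      show e _ = e _
      rw [e.apply_symm_apply]
      have : e (Y.ρ t (e.symm v)) = V.ρ t (e (e.symm v)) := homLin_comm f t (e.symm v)
      rw [this, e.apply_symm_apply]
    let ginv : V ⟶ Y := ⟨FGModuleCat.ofHom ((e.symm : (↥V) →ₗ[ℂ] (↥Y))), fun t => by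
      apply FGModuleCat.hom_ext
      apply LinearMap.ext
      intro v
      exact hecomm t v⟩
    constructor
    · intro _ hf0
      rw [hf0] at htop
      rw [homLin_zero, LinearMap.range_zero] at htop
      have : Subsingleton (↥V) := by
        constructor
        intro a b
        have ha : a ∈ (⊥ : Submodule ℂ (↥V)) := htop ▸ Submodule.mem_top
        have hb : b ∈ (⊥ : Submodule ℂ (↥V)) := htop ▸ Submodule.mem_top
        rw [Submodule.mem_bot] at ha hb
        rw [ha, hb]
      rw [finrank_zero_of_subsingleton] at h0
      exact Nat.lt_irrefl 0 h0
    · intro _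
      refine ⟨⟨ginv, ?_, ?_⟩⟩
      · apply hom_eq_of_homLin
        apply LinearMap.ext
        intro y
        show e.symm (e y) = y
        exact e.symm_apply_apply y
      · apply hom_eq_of_homLin
        apply LinearMap.ext
        intro v
        show e (e.symm v) = v
        exact e.apply_symm_apply v

theorem char_mem_span_aux (n : ℕ) :
    ∀ (V : FDRep ℂ G), finrank ℂ (↥V) = n → V.character ∈ R G := by
  induction n using Nat.strong_induction_on with
  | _ n ih =>
    intro V hn
    rcases Nat.eq_zero_or_pos n with h0 | hpos
    · subst h0
      have hss : Subsingleton (↥V) := Module.finrank_zero_iff.mp hn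
      have hc : V.character = 0 := by
        funext t
        show LinearMap.trace ℂ (↥V) (V.ρ t) = 0
        have h1 : (V.ρ t) = 0 := Subsingleton.elim _ _
        rw [h1, map_zero]
      rw [hc]
      exact Submodule.zero_mem _
    · by_cases hs : ∀ p : Submodule ℂ (↥V), IsInvariant V.ρ p → p = ⊥ ∨ p = ⊤
      · have hsimple : Simple V := simple_of_no_invariant V (hn ▸ hpos) hs
        exact Submodule.subset_span ⟨V, hsimple, rfl⟩
      · push_neg at hs
        obtain ⟨p, hpinv, hpbot, hptop⟩ := hs
        obtain ⟨q, hqinv, hcompl⟩ := exists_invariant_compl V.ρ p hpinv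
        have hchar : V.character =
            (FDRep.of (restrictRep V.ρ p hpinv)).character +
            (FDRep.of (restrictRep V.ρ q hqinv)).character := by
          funext t
          show LinearMap.trace ℂ (↥V) (V.ρ t) = _
          rw [char_add_of_isCompl V.ρ p q hpinv hqinv hcompl t]
          rfl
        rw [hchar]
        have hpd : finrank ℂ (↥p) < n := hn ▸ Submodule.finrank_lt hptop
        have hqtop : q ≠ ⊤ := by
          intro hq
          apply hpbot
          have hd := hcompl.disjoint
          rw [hq, disjoint_top] at hd
          exact hd
        have hqd : finrank ℂ (↥q) < n := hn ▸ Submodule.finrank_lt hqtop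
        exact Submodule.add_mem _ (ih _ hpd _ rfl) (ih _ hqd _ rfl)

theorem char_mem_span (V : FDRep ℂ G) : V.character ∈ R G :=
  char_mem_span_aux _ V rfl

theorem mul_mem_R {a b : G → ℂ} (ha : a ∈ R G) (hb : b ∈ R G) : a * b ∈ R G := by
  refine Submodule.span_induction₂
    (p := fun x y _ _ => x * y ∈ R G) ?_ ?_ ?_ ?_ ?_ ?_ ?_ ha hb
  · rintro x y ⟨Vx, hVx, rfl⟩ ⟨Vy, hVy, rfl⟩
    rw [← FDRep.char_tensor]
    exact char_mem_span _
  · intro y hy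
    rw [zero_mul]
    exact Submodule.zero_mem _
  · intro x hx
    rw [mul_zero]
    exact Submodule.zero_mem _
  · intro x y z _ _ _ h1 h2
    rw [add_mul]
    exact Submodule.add_mem _ h1 h2
  · intro x y z _ _ _ h1 h2
    rw [mul_add]
    exact Submodule.add_mem _ h1 h2
  · intro r x y _ _ h1
    rw [smul_mul_assoc]
    exact Submodule.smul_mem _ _ h1
  · intro r x y _ _ h1
    rw [mul_smul_comm]
    exact Submodule.smul_mem _ _ h1

end FDRepPart

section Perm

open Module

theorem char_ofMulAction (X : Type) [Fintype X] [DecidableEq X] [MulAction G X]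
    [FiniteDimensional ℂ (X →₀ ℂ)] (t : G) :
    (FDRep.of (Representation.ofMulAction ℂ G X)).character t
      = ((Finset.univ.filter fun x : X => t • x = x).card : ℂ) := by
  show LinearMap.trace ℂ (MonoidAlgebra ℂ X) (Representation.ofMulAction ℂ G X t) = _
  have hconj : Representation.ofMulAction ℂ G X t =
      (MonoidAlgebra.coeffLinearEquiv ℂ).symm.conj (Finsupp.lmapDomain ℂ ℂ (t • ·)) := rfl
  rw [hconj, LinearMap.trace_conj']
  rw [LinearMap.trace_eq_matrix_trace ℂ (Finsupp.basisSingleOne)]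
  rw [Matrix.trace]
  rw [← Finset.sum_boole]
  congr 1
  funext x
  rw [Matrix.diag_apply, LinearMap.toMatrix_apply, Finsupp.basisSingleOne_repr]
  show (Finsupp.lmapDomain ℂ ℂ (t • ·) (Finsupp.single x 1)) x = _
  rw [Finsupp.lmapDomain_apply, Finsupp.mapDomain_single, Finsupp.single_apply]

end Perm

end Sep

open Sep Module in
theorem Sep.exists_virtual_character_separating_aux
    (G : Type) [Group G] [Fintype G] (g h : G)
    (hdisj : ∀ (m : ℤ) (k : G), h ^ m ≠ k * g * k⁻¹) :
    ∃ x : G → ℂ,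
      x ∈ Submodule.span ℤ {f : G → ℂ | ∃ V : FDRep ℂ G, Simple V ∧ f = V.character} ∧
      x g ≠ 0 ∧ ∀ m : ℤ, x (h ^ m) = 0 := by
  classical
  set H := Subgroup.zpowers h with hH
  letI : Fintype (G ⧸ H) := Fintype.ofFinite _
  letI : FiniteDimensional ℂ ((G ⧸ H) →₀ ℂ) :=
    Module.Finite.equiv (Finsupp.linearEquivFunOnFinite ℂ ℂ (G ⧸ H)).symm
  set θV := FDRep.of (Representation.ofMulAction ℂ G (G ⧸ H)) with hθV
  set θ : G → ℂ := θV.character with hθdef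
  set N : G → ℕ := fun t => (Finset.univ.filter fun x : G ⧸ H => t • x = x).card with hNdef
  have hθ : ∀ t, θ t = (N t : ℂ) := fun t => char_ofMulAction (G ⧸ H) t
  set tV := FDRep.of (Representation.trivial ℂ (G := G) (V := ℂ)) with htV
  have htriv : tV.character = fun _ => (1 : ℂ) := by
    funext t
    show LinearMap.trace ℂ ℂ _ = 1
    have h1 : tV.ρ t = LinearMap.id := rfl
    rw [h1, LinearMap.trace_id]
    simp
  -- facts about N
  have hNg : N g = 0 := by
    rw [hNdef]
    rw [Finset.card_eq_zero, Finset.filter_eq_empty_iff]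
    intro x _
    induction x using QuotientGroup.induction_on with
    | H a =>
      intro hfix
      rw [MulAction.Quotient.smul_mk, QuotientGroup.eq] at hfix
      have : (g * a)⁻¹ * a ∈ H := hfix
      rw [mul_inv_rev] at this
      obtain ⟨m, hm⟩ := Subgroup.mem_zpowers_iff.mp this
      apply hdisj (-m) a⁻¹
      rw [zpow_neg, hm]
      simp [mul_assoc]
  have hNH : ∀ a : G, a ∈ H → N a ≠ 0 := by
    intro a ha
    rw [hNdef]
    apply Finset.card_ne_zero_of_mem (a := QuotientGroup.mk 1)
    rw [Finset.mem_filter]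
    refine ⟨Finset.mem_univ _, ?_⟩
    rw [MulAction.Quotient.smul_mk, QuotientGroup.eq]
    simpa using inv_mem ha
  set T : Finset ℕ := (Finset.univ.filter fun a : G => a ∈ H).image N with hT
  refine ⟨∏ v ∈ T, (θ - (v : ℂ) • tV.character), ?_, ?_, ?_⟩
  · show _ ∈ R G
    refine Finset.prod_induction _ (· ∈ R G) (fun a b ha hb => mul_mem_R ha hb) ?_ ?_
    · have h1 : (1 : G → ℂ) = tV.character := by
        funext t
        rw [htriv]
        rfl
      rw [h1]
      exact char_mem_span _
    · intro v _
      apply Submodule.sub_mem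
      · exact char_mem_span _
      · have : (v : ℂ) • tV.character = (v : ℤ) • tV.character := by
          rw [← Int.cast_smul_eq_zsmul ℂ]
          norm_num
        rw [this]
        exact Submodule.smul_mem _ _ (char_mem_span _)
  · rw [Finset.prod_apply]
    apply Finset.prod_ne_zero_iff.mpr
    intro v hv
    rw [hT] at hv
    obtain ⟨a, haf, hva⟩ := Finset.mem_image.mp hv
    rw [Finset.mem_filter] at haf
    have hvne : v ≠ 0 := hva ▸ hNH a haf.2
    have hfac : (θ - (v : ℂ) • tV.character) g = -(v : ℂ) := by
      rw [Pi.sub_apply, Pi.smul_apply, htriv, hθ, hNg]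
      simp
    rw [hfac]
    exact neg_ne_zero.mpr (Nat.cast_ne_zero.mpr hvne)
  · intro m
    rw [Finset.prod_apply]
    apply Finset.prod_eq_zero (i := N (h ^ m))
    · rw [hT]
      apply Finset.mem_image_of_mem
      rw [Finset.mem_filter]
      exact ⟨Finset.mem_univ _, Subgroup.zpow_mem _ (Subgroup.mem_zpowers h) m⟩
    · rw [Pi.sub_apply, Pi.smul_apply, htriv, hθ]
      simp

/-- Let `G` be a finite group and `g, h ∈ G` with the cyclic subgroup generated by `h`
disjoint from the conjugacy class of `g`. Then there is a virtual character `x`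
(a `ℤ`-linear combination of irreducible complex characters of `G`) with `x g ≠ 0` and
`x (h ^ m) = 0` for all integers `m`. -/
theorem exists_virtual_character_separating
    (G : Type) [Group G] [Fintype G] (g h : G)
    (hdisj : ∀ (m : ℤ) (k : G), h ^ m ≠ k * g * k⁻¹) :
    ∃ x : G → ℂ,
      x ∈ Submodule.span ℤ {f : G → ℂ | ∃ V : FDRep ℂ G, Simple V ∧ f = V.character} ∧
      x g ≠ 0 ∧ ∀ m : ℤ, x (h ^ m) = 0 := by
  exact Sep.exists_virtual_character_separating_aux G g h hdisj
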